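/- Let M be a smooth finite-dimensional manifold, v a smooth vector field on M, and X₀, X₁ ⊂ M two sets. Let F : M → ℝ be smooth with F ≤ 0 on X₀ and F ≥ 1 on X₁, and let γ be an integral curve of v defined on an interval [t₀, t₁] with t₀ < t₁, γ(t₀) ∈ X₀ and γ(t₁) ∈ X₁. Then there exists t ∈ [t₀, t₁] such that (L_vF)(γ(t)) ≥ 1/(t₁ − t₀). Consequently, every chord of v from X₀ to X₁ has time-length at least 1/L_max(X₀, X₁; v), where L_max(X₀, X₁; v) := inf { sup_M L_vF : F ∈ C_c^∞(M), F ≤ 0 on X₀, F ≥ 1 on X₁ } (provided L_max > 0). -/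

import Mathlib

open Set
open scoped Manifold

noncomputable section

/-- The Lie derivative `(L_v F)(x) = dF_x(v(x))` of a function along a vector field. -/
def lieDeriv {E : Type*} [NormedAddCommGroup E] [NormedSpace ℝ E]
    {M : Type*} [TopologicalSpace M] [ChartedSpace E M]
    [IsManifold (modelWithCornersSelf ℝ E) (⊤ : ℕ∞) M]
    (v : (x : M) → TangentSpace (modelWithCornersSelf ℝ E) x) (F : M → ℝ) (x : M) : ℝ :=
  mfderiv (modelWithCornersSelf ℝ E) 𝓘(ℝ, ℝ) F x (v x)

/-- The old (2024) Mathlib `IsIntegralCurveOn` for manifolds (full `HasMFDerivAt`). -/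
def IsIntegralCurveOnOld {E : Type*} [NormedAddCommGroup E] [NormedSpace ℝ E]
    {H : Type*} [TopologicalSpace H] {I : ModelWithCorners ℝ E H}
    {M : Type*} [TopologicalSpace M] [ChartedSpace H M]
    (γ : ℝ → M) (v : (x : M) → TangentSpace I x) (s : Set ℝ) : Prop :=
  ∀ t ∈ s, HasMFDerivAt 𝓘(ℝ, ℝ) I γ t ((1 : ℝ →L[ℝ] ℝ).smulRight <| v (γ t))

/-- The quantity `L_max(X₀,X₁;v) = inf { sup_M L_v F }` over compactly supported smooth
`F` with `F ≤ 0` on `X₀` and `F ≥ 1` on `X₁`. -/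
def Lmax {E : Type*} [NormedAddCommGroup E] [NormedSpace ℝ E]
    {M : Type*} [TopologicalSpace M] [ChartedSpace E M]
    [IsManifold (modelWithCornersSelf ℝ E) (⊤ : ℕ∞) M]
    (X₀ X₁ : Set M) (v : (x : M) → TangentSpace (modelWithCornersSelf ℝ E) x) : ℝ :=
  sInf {c | ∃ F : M → ℝ, ContMDiff (modelWithCornersSelf ℝ E) 𝓘(ℝ, ℝ) (⊤ : ℕ∞) F ∧
    HasCompactSupport F ∧ (∀ x ∈ X₀, F x ≤ 0) ∧ (∀ x ∈ X₁, 1 ≤ F x) ∧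
    c = sSup (Set.range (lieDeriv v F))}


/-- the basic calculus bound: if `F ≤ 0` on `X₀`, `F ≥ 1` on `X₁` and
`γ` is an integral curve of `v` on `[t₀,t₁]` going from `X₀` to `X₁`, then
`L_v F ≥ 1/(t₁-t₀)` somewhere along the chord; consequently (when
`L_max(X₀,X₁;v) > 0`) every chord of `v` from `X₀` to `X₁` has time-length at least
`1/L_max(X₀,X₁;v)`. -/
theorem stmt_13 {E : Type*} [NormedAddCommGroup E] [NormedSpace ℝ E]
    [FiniteDimensional ℝ E]
    {M : Type*} [TopologicalSpace M] [ChartedSpace E M]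
    [IsManifold (modelWithCornersSelf ℝ E) (⊤ : ℕ∞) M]
    [T2Space M] [SecondCountableTopology M]
    (v : (x : M) → TangentSpace (modelWithCornersSelf ℝ E) x)
    (hv : ContMDiff (modelWithCornersSelf ℝ E) (modelWithCornersSelf ℝ E).tangent (⊤ : ℕ∞)
      (fun x => (⟨x, v x⟩ : TangentBundle (modelWithCornersSelf ℝ E) M)))
    (X₀ X₁ : Set M) :
    (∀ (F : M → ℝ), ContMDiff (modelWithCornersSelf ℝ E) 𝓘(ℝ, ℝ) (⊤ : ℕ∞) F →
      (∀ x ∈ X₀, F x ≤ 0) → (∀ x ∈ X₁, 1 ≤ F x) →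
      ∀ (t₀ t₁ : ℝ) (γ : ℝ → M), t₀ < t₁ → IsIntegralCurveOnOld γ v (Icc t₀ t₁) →
        γ t₀ ∈ X₀ → γ t₁ ∈ X₁ →
        ∃ t ∈ Icc t₀ t₁, 1 / (t₁ - t₀) ≤ lieDeriv v F (γ t)) ∧
    (0 < Lmax X₀ X₁ v →
      ∀ (t₀ τ : ℝ) (γ : ℝ → M), 0 < τ → IsIntegralCurveOnOld γ v (Icc t₀ (t₀ + τ)) →
        γ t₀ ∈ X₀ → γ (t₀ + τ) ∈ X₁ → 1 / Lmax X₀ X₁ v ≤ τ) := by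

  have key : ∀ (F : M → ℝ), ContMDiff (modelWithCornersSelf ℝ E) 𝓘(ℝ, ℝ) (⊤ : ℕ∞) F →
      (∀ x ∈ X₀, F x ≤ 0) → (∀ x ∈ X₁, 1 ≤ F x) →
      ∀ (t₀ t₁ : ℝ) (γ : ℝ → M), t₀ < t₁ → IsIntegralCurveOnOld γ v (Icc t₀ t₁) →
        γ t₀ ∈ X₀ → γ t₁ ∈ X₁ →
        ∃ t ∈ Icc t₀ t₁, 1 / (t₁ - t₀) ≤ lieDeriv v F (γ t) := by
    intro F hF hF0 hF1 t₀ t₁ γ hlt hγ h0 h1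
    have hd : ∀ t ∈ Icc t₀ t₁, HasDerivAt (F ∘ γ) (lieDeriv v F (γ t)) t := by
      intro t ht
      have hγ' := hγ t ht
      have hFd : HasMFDerivAt (modelWithCornersSelf ℝ E) 𝓘(ℝ, ℝ) F (γ t)
          (mfderiv (modelWithCornersSelf ℝ E) 𝓘(ℝ, ℝ) F (γ t)) :=
        (hF.mdifferentiableAt (by simp)).hasMFDerivAt
      have hcomp := hFd.comp t hγ'
      have : HasFDerivAt (F ∘ γ) (((mfderiv (modelWithCornersSelf ℝ E) 𝓘(ℝ, ℝ) F (γ t)).comp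
          ((1 : ℝ →L[ℝ] ℝ).smulRight (v (γ t)))) : ℝ →L[ℝ] ℝ) t :=
        hasMFDerivAt_iff_hasFDerivAt.mp hcomp
      have hde := HasFDerivAt.hasDerivAt (𝕜 := ℝ) (F := ℝ) (f := F ∘ γ) this
      have heval : lieDeriv v F (γ t) = ((mfderiv (modelWithCornersSelf ℝ E) 𝓘(ℝ, ℝ) F (γ t)).comp
          ((1 : ℝ →L[ℝ] ℝ).smulRight (v (γ t)))) 1 := by
        simp [lieDeriv]
        exact rfl
      rw [heval]
      exact hde
    have hcont : ContinuousOn (F ∘ γ) (Icc t₀ t₁) :=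
      hF.continuous.comp_continuousOn (fun t ht => (hγ t ht).continuousAt.continuousWithinAt)
    obtain ⟨c, hc, hceq⟩ := exists_hasDerivAt_eq_slope (F ∘ γ) (fun t => lieDeriv v F (γ t))
      hlt hcont (fun x hx => hd x (Ioo_subset_Icc_self hx))
    refine ⟨c, Ioo_subset_Icc_self hc, ?_⟩
    rw [hceq]
    have h10 : (1 : ℝ) ≤ (F ∘ γ) t₁ - (F ∘ γ) t₀ := by
      have := hF0 _ h0
      have := hF1 _ h1
      simp only [Function.comp_apply]
      linarith
    have hpos : (0 : ℝ) < t₁ - t₀ := by linarith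
    gcongr
  refine ⟨key, ?_⟩
  intro hLpos t₀ τ γ hτ hγ h0 h1
  set S : Set ℝ := {c | ∃ F : M → ℝ, ContMDiff (modelWithCornersSelf ℝ E) 𝓘(ℝ, ℝ) (⊤ : ℕ∞) F ∧
    HasCompactSupport F ∧ (∀ x ∈ X₀, F x ≤ 0) ∧ (∀ x ∈ X₁, 1 ≤ F x) ∧
    c = sSup (Set.range (lieDeriv v F))} with hS
  have hLdef : Lmax X₀ X₁ v = sInf S := rfl
  have hSne : S.Nonempty := by
    by_contra h
    rw [not_nonempty_iff_eq_empty] at h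
    rw [hLdef, h, Real.sInf_empty] at hLpos
    exact lt_irrefl 0 hLpos
  have hlb : ∀ c ∈ S, 1 / τ ≤ c := by
    rintro c ⟨F, hF, hFc, hF0, hF1, rfl⟩
    obtain ⟨t, ht, hle⟩ := key F hF hF0 hF1 t₀ (t₀ + τ) γ (by linarith) hγ h0 h1
    have hmem : lieDeriv v F (γ t) ∈ Set.range (lieDeriv v F) := ⟨γ t, rfl⟩
    by_cases hbdd : BddAbove (Set.range (lieDeriv v F))
    · calc 1 / τ = 1 / (t₀ + τ - t₀) := by ring_nf
        _ ≤ lieDeriv v F (γ t) := hle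
        _ ≤ sSup (Set.range (lieDeriv v F)) := le_csSup hbdd hmem
    · exfalso
      have hzero : sSup (Set.range (lieDeriv v F)) = 0 :=
        Real.sSup_of_not_bddAbove hbdd
      have hmemS : (0 : ℝ) ∈ S := by
        exact ⟨F, hF, hFc, hF0, hF1, hzero.symm⟩
      by_cases hSbdd : BddBelow S
      · have := csInf_le hSbdd hmemS
        rw [hLdef] at hLpos; linarith
      · rw [hLdef, Real.sInf_of_not_bddBelow hSbdd] at hLpos
        exact lt_irrefl 0 hLpos
  have h1τ : 1 / τ ≤ Lmax X₀ X₁ v := by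
    rw [hLdef]
    exact le_csInf hSne hlb
  exact (one_div_le hLpos hτ).mpr h1τ
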